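/- For every positive integer n not divisible by 3, the (3,n)-rational q,t-Catalan polynomial is symmetric in q and t: C_{3,n}(q,t) = C_{3,n}(t,q). -/

import Mathlib

open MvPolynomial

/-- An `(m,n)`-Dyck path: a north/east lattice path from `(0,0)` to `(m,n)` staying
weakly above the diagonal `y = (n/m)x`.  Such a path is encoded by recording, for each
of the `m` columns (indexed `0,…,m-1` from left to right), the number of cells of that
column lying above the path; this gives an antitone sequence, and the diagonal
condition for the east step in column `i` reads `m * c i ≤ n * (m - 1 - i)`. -/
def DyckPath (m n : ℕ) : Type :=
  {c : Fin m → Fin (n + 1) //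
    (∀ i j : Fin m, i ≤ j → (c j : ℕ) ≤ (c i : ℕ)) ∧
      ∀ i : Fin m, m * (c i : ℕ) ≤ n * (m - 1 - (i : ℕ))}

noncomputable instance instFintypeDyckPath (m n : ℕ) : Fintype (DyckPath m n) := by
  classical
  unfold DyckPath
  infer_instance

namespace DyckPath

variable {m n : ℕ}

/-- `λ(Π)`, the set of cells of the `m × n` lattice lying above the path `Π`.
The cell `(i, j)` (with `i : Fin m`, `j : Fin n`) is the cell in column `i + 1`
(from the left) and row `j + 1` (from the bottom) in the paper's 1-based indexing. -/
def cellsAbove (P : DyckPath m n) : Set (Fin m × Fin n) :=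
  {x | n - (P.1 x.1 : ℕ) ≤ (x.2 : ℕ)}

/-- `arm(x)`: the number of cells of `λ(Π)` strictly east of `x` (in the row of `x`). -/
noncomputable def arm (P : DyckPath m n) (x : Fin m × Fin n) : ℕ :=
  {y ∈ P.cellsAbove | x.1 < y.1 ∧ y.2 = x.2}.ncard

/-- `leg(x)`: the number of cells of `λ(Π)` strictly south of `x` (in the column of `x`). -/
noncomputable def leg (P : DyckPath m n) (x : Fin m × Fin n) : ℕ :=
  {y ∈ P.cellsAbove | y.1 = x.1 ∧ y.2 < x.2}.ncard

end DyckPath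

/-- The dinv condition `arm/(leg+1) < m/n < (arm+1)/leg` for a cell with given arm `a`
and leg `l`, the right inequality being interpreted as true when `l = 0`. -/
def dinvCond (m n a l : ℕ) : Prop :=
  (a : ℚ) / ((l : ℚ) + 1) < (m : ℚ) / (n : ℚ) ∧
    (l = 0 ∨ (m : ℚ) / (n : ℚ) < ((a : ℚ) + 1) / (l : ℚ))

namespace DyckPath

variable {m n : ℕ}

/-- `dinv(Π)`: the number of cells `x ∈ λ(Π)` with
`arm(x)/(leg(x)+1) < m/n < (arm(x)+1)/leg(x)`. -/
noncomputable def dinv (P : DyckPath m n) : ℕ :=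
  {x ∈ P.cellsAbove | dinvCond m n (P.arm x) (P.leg x)}.ncard

/-- `area(Π)`: the number of cells of the lattice lying entirely between the path and
the diagonal, i.e. cells lying entirely weakly above the diagonal `y = (n/m)x` and
below the path. -/
noncomputable def area (P : DyckPath m n) : ℕ :=
  {x : Fin m × Fin n | n * ((x.1 : ℕ) + 1) ≤ m * (x.2 : ℕ) ∧ x ∉ P.cellsAbove}.ncard

end DyckPath

/-- The `(m,n)`-rational `q,t`-Catalan polynomial `C_{m,n}(q,t)`, with `q = X 0` and
`t = X 1`:  `C_{m,n}(q,t) = Σ_Π q^{dinv(Π)} t^{area(Π)}` over all `(m,n)`-Dyck paths. -/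
noncomputable def ratCatalan (m n : ℕ) : MvPolynomial (Fin 2) ℤ :=
  ∑ P : DyckPath m n, X 0 ^ P.dinv * X 1 ^ P.area

/-- The rank of the cell `(i, j)` of the `3 × n` lattice: in the paper's 1-based
coordinates `(a, b) = (i+1, j+1)`, this is `R(a,b) = -a·n + 3(b-1)`. -/
def cellRank (n : ℕ) (x : Fin 3 × Fin n) : ℤ :=
  3 * (x.2 : ℤ) - ((x.1 : ℤ) + 1) * (n : ℤ)

/-- The set of positive ranks of the `3 × n` lattice: these, in increasing order, are
the entries of the rank word. -/
def posRank (n : ℕ) : Set ℤ :=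
  {r | 0 < r ∧ ∃ x : Fin 3 × Fin n, cellRank n x = r}

/-- The set of marked ranks of a `(3,n)`-Dyck path: the ranks of the cells above
the path. -/
def markedRank {n : ℕ} (P : DyckPath 3 n) : Set ℤ :=
  cellRank n '' P.cellsAbove

/-- `skips(Π)`: the number of skips of `Π`, i.e. of maximal blocks of consecutive
unmarked entries of the rank word of `Π` having at least one marked entry to the left
and at least one marked entry to the right.  Each such block is counted through its
rightmost entry `r`: `r` is an unmarked entry, some marked entry lies to its left, and
the next entry of the rank word after `r` is marked. -/
noncomputable def DyckPath.skips {n : ℕ} (P : DyckPath 3 n) : ℕ :=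
  {r : ℤ | r ∈ posRank n ∧ r ∉ markedRank P ∧
    (∃ l ∈ markedRank P, l < r) ∧
    ∃ s ∈ markedRank P, r < s ∧ ∀ t ∈ posRank n, r < t → s ≤ t}.ncard

set_option maxHeartbeats 1600000

namespace QtAux

open Finset

lemma card_interval {n : ℕ} (p : Fin n → Prop) [DecidablePred p] (lo hi : ℕ) (hhi : hi ≤ n)
    (h : ∀ j : Fin n, p j ↔ (lo ≤ (j : ℕ) ∧ (j : ℕ) < hi)) :
    (univ.filter p).card = hi - lo := by
  have himg : (univ.filter p).image Fin.val = Finset.Ico lo hi := by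
    ext m
    simp only [Finset.mem_image, Finset.mem_filter, Finset.mem_univ, true_and, Finset.mem_Ico]
    constructor
    · rintro ⟨j, hj, rfl⟩; exact (h j).1 hj
    · rintro ⟨h1, h2⟩
      exact ⟨⟨m, lt_of_lt_of_le h2 hhi⟩, (h _).2 ⟨h1, h2⟩, rfl⟩
  rw [← Nat.card_Ico lo hi, ← himg, Finset.card_image_of_injective _ Fin.val_injective]

lemma card_none {n : ℕ} (p : Fin n → Prop) [DecidablePred p] (h : ∀ j : Fin n, ¬ p j) :
    (univ.filter p).card = 0 := by
  rw [Finset.card_eq_zero, Finset.filter_eq_empty_iff]; exact fun j _ => h j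

lemma card_interval2 {n : ℕ} (p : Fin n → Prop) [DecidablePred p] (lo1 hi1 lo2 hi2 : ℕ)
    (hord : hi1 ≤ lo2) (hhi1 : hi1 ≤ n) (hhi2 : hi2 ≤ n)
    (h : ∀ j : Fin n, p j ↔ ((lo1 ≤ (j : ℕ) ∧ (j : ℕ) < hi1) ∨ (lo2 ≤ (j : ℕ) ∧ (j : ℕ) < hi2))) :
    (univ.filter p).card = (hi1 - lo1) + (hi2 - lo2) := by
  classical
  rw [filter_congr (fun j _ => (by simpa using h j)), Finset.filter_or,
    Finset.card_union_of_disjoint, card_interval _ lo1 hi1 hhi1 (fun _ => Iff.rfl),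
    card_interval _ lo2 hi2 hhi2 (fun _ => Iff.rfl)]
  rw [Finset.disjoint_filter]
  rintro j _ ⟨_, h2⟩ ⟨h3, _⟩; omega

lemma ncard_prod {n : ℕ} (s : Set (Fin 3 × Fin n)) [DecidablePred (· ∈ s)] :
    s.ncard = ∑ i : Fin 3, (univ.filter fun j : Fin n => (i, j) ∈ s).card := by
  classical
  rw [Set.ncard_eq_toFinset_card' s]
  have : s.toFinset = univ.filter (· ∈ s) := by ext x; simp
  rw [this, Finset.card_filter, Fintype.sum_prod_type]
  exact Finset.sum_congr rfl fun i _ => (Finset.card_filter _ _).symm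

lemma mem_cells {n : ℕ} {P : DyckPath 3 n} {i : Fin 3} {j : Fin n} :
    (i, j) ∈ P.cellsAbove ↔ n - (P.1 i : ℕ) ≤ (j : ℕ) := Iff.rfl

lemma path_facts {n : ℕ} (P : DyckPath 3 n) :
    (P.1 1 : ℕ) ≤ (P.1 0 : ℕ) ∧ 3 * (P.1 0 : ℕ) ≤ 2 * n ∧ 3 * (P.1 1 : ℕ) ≤ n
      ∧ (P.1 2 : ℕ) = 0 := by
  have h0 := P.2.2 0
  have h1 := P.2.2 1
  have h2 := P.2.2 2
  have hm := P.2.1 0 1 (by decide)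
  simp only [Fin.val_zero, Fin.val_one, Fin.val_two] at h0 h1 h2
  norm_num at h0 h1 h2
  exact ⟨hm, by omega, by omega, by simp [h2]⟩

lemma dinvCond_iff {n : ℕ} (hn : 0 < n) (A l : ℕ) :
    dinvCond 3 n A l ↔ (n * A < 3 * (l + 1) ∧ (l = 0 ∨ 3 * l < n * (A + 1))) := by
  have hn' : (0 : ℚ) < (n : ℚ) := by exact_mod_cast hn
  unfold dinvCond
  constructor
  · rintro ⟨h1, h2⟩
    refine ⟨?_, ?_⟩
    · rw [div_lt_div_iff₀ (by positivity) hn'] at h1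
      have : A * n < 3 * (l + 1) := by exact_mod_cast h1
      rwa [Nat.mul_comm] at this
    · rcases h2 with h2 | h2
      · exact Or.inl h2
      · rcases Nat.eq_zero_or_pos l with hl | hl
        · exact Or.inl hl
        · right
          have hl' : (0 : ℚ) < (l : ℚ) := by exact_mod_cast hl
          rw [div_lt_div_iff₀ hn' hl'] at h2
          have : 3 * l < (A + 1) * n := by exact_mod_cast h2
          rwa [Nat.mul_comm (A+1) n] at this
  · rintro ⟨h1, h2⟩
    refine ⟨?_, ?_⟩
    · rw [div_lt_div_iff₀ (by positivity) hn']
      have : A * n < 3 * (l + 1) := by rwa [Nat.mul_comm]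
      exact_mod_cast this
    · rcases h2 with h2 | h2
      · exact Or.inl h2
      · rcases Nat.eq_zero_or_pos l with hl | hl
        · exact Or.inl hl
        · right
          have hl' : (0 : ℚ) < (l : ℚ) := by exact_mod_cast hl
          rw [div_lt_div_iff₀ hn' hl']
          have : 3 * l < (A + 1) * n := by rwa [Nat.mul_comm (A+1) n]
          exact_mod_cast this

lemma arm_zero {n : ℕ} (P : DyckPath 3 n) (j : Fin n) :
    P.arm (0, j) = if n - (P.1 1 : ℕ) ≤ (j : ℕ) then 1 else 0 := by
  classical
  obtain ⟨hm, ha, hb, h2⟩ := path_facts P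
  unfold DyckPath.arm
  rw [ncard_prod, Fin.sum_univ_three]
  have e0 : (univ.filter fun j' : Fin n =>
      ((0 : Fin 3), j') ∈ {y ∈ P.cellsAbove | (0:Fin 3) < y.1 ∧ y.2 = j}).card = 0 := by
    apply card_none; intro j'
    simp [Set.mem_sep_iff]
  have e2 : (univ.filter fun j' : Fin n =>
      ((2 : Fin 3), j') ∈ {y ∈ P.cellsAbove | (0:Fin 3) < y.1 ∧ y.2 = j}).card = 0 := by
    apply card_none; intro j'
    simp only [Set.mem_sep_iff, mem_cells]
    have := j'.isLt
    intro h; omega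
  have e1 : (univ.filter fun j' : Fin n =>
      ((1 : Fin 3), j') ∈ {y ∈ P.cellsAbove | (0:Fin 3) < y.1 ∧ y.2 = j}).card
      = if n - (P.1 1 : ℕ) ≤ (j : ℕ) then 1 else 0 := by
    split_ifs with hc
    · rw [card_interval _ (j : ℕ) ((j : ℕ) + 1) (by have := j.isLt; omega) (fun j' => by
        simp only [Set.mem_sep_iff, mem_cells, Fin.ext_iff, Fin.lt_def]
        constructor
        · rintro ⟨_, _, h⟩; omega
        · rintro ⟨h1', h2'⟩
          have : (j' : ℕ) = (j : ℕ) := by omega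
          exact ⟨by omega, by norm_num, this⟩)]
      omega
    · apply card_none; intro j'
      simp only [Set.mem_sep_iff, mem_cells, Fin.ext_iff]
      rintro ⟨hmem, _, hj⟩
      exact hc (by omega)
  rw [e0, e1, e2]
  omega

lemma arm_one {n : ℕ} (P : DyckPath 3 n) (j : Fin n) : P.arm (1, j) = 0 := by
  classical
  obtain ⟨hm, ha, hb, h2⟩ := path_facts P
  unfold DyckPath.arm
  rw [ncard_prod, Fin.sum_univ_three]
  have e0 : (univ.filter fun j' : Fin n =>
      ((0 : Fin 3), j') ∈ {y ∈ P.cellsAbove | (1:Fin 3) < y.1 ∧ y.2 = j}).card = 0 := by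
    apply card_none; intro j'; simp [Set.mem_sep_iff]
  have e1 : (univ.filter fun j' : Fin n =>
      ((1 : Fin 3), j') ∈ {y ∈ P.cellsAbove | (1:Fin 3) < y.1 ∧ y.2 = j}).card = 0 := by
    apply card_none; intro j'; simp [Set.mem_sep_iff]
  have e2 : (univ.filter fun j' : Fin n =>
      ((2 : Fin 3), j') ∈ {y ∈ P.cellsAbove | (1:Fin 3) < y.1 ∧ y.2 = j}).card = 0 := by
    apply card_none; intro j'
    simp only [Set.mem_sep_iff, mem_cells]
    have := j'.isLt
    intro h; omega
  rw [e0, e1, e2]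

lemma leg_zero {n : ℕ} (P : DyckPath 3 n) (j : Fin n) :
    P.leg (0, j) = (j : ℕ) - (n - (P.1 0 : ℕ)) := by
  classical
  unfold DyckPath.leg
  rw [ncard_prod, Fin.sum_univ_three]
  have e1 : (univ.filter fun j' : Fin n =>
      ((1 : Fin 3), j') ∈ {y ∈ P.cellsAbove | y.1 = (0:Fin 3) ∧ y.2 < j}).card = 0 := by
    apply card_none; intro j'; simp [Set.mem_sep_iff]
  have e2 : (univ.filter fun j' : Fin n =>
      ((2 : Fin 3), j') ∈ {y ∈ P.cellsAbove | y.1 = (0:Fin 3) ∧ y.2 < j}).card = 0 := by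
    apply card_none; intro j'; simp [Set.mem_sep_iff]
  have e0 : (univ.filter fun j' : Fin n =>
      ((0 : Fin 3), j') ∈ {y ∈ P.cellsAbove | y.1 = (0:Fin 3) ∧ y.2 < j}).card
      = (j : ℕ) - (n - (P.1 0 : ℕ)) := by
    rw [card_interval _ (n - (P.1 0 : ℕ)) (j : ℕ) (by have := j.isLt; omega) (fun j' => by
      simp only [Set.mem_sep_iff, mem_cells, Fin.lt_def]
      tauto)]
  rw [e0, e1, e2]
  omega

lemma leg_one {n : ℕ} (P : DyckPath 3 n) (j : Fin n) :
    P.leg (1, j) = (j : ℕ) - (n - (P.1 1 : ℕ)) := by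
  classical
  unfold DyckPath.leg
  rw [ncard_prod, Fin.sum_univ_three]
  have e0 : (univ.filter fun j' : Fin n =>
      ((0 : Fin 3), j') ∈ {y ∈ P.cellsAbove | y.1 = (1:Fin 3) ∧ y.2 < j}).card = 0 := by
    apply card_none; intro j'; simp [Set.mem_sep_iff]
  have e2 : (univ.filter fun j' : Fin n =>
      ((2 : Fin 3), j') ∈ {y ∈ P.cellsAbove | y.1 = (1:Fin 3) ∧ y.2 < j}).card = 0 := by
    apply card_none; intro j'; simp [Set.mem_sep_iff]
  have e1 : (univ.filter fun j' : Fin n =>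
      ((1 : Fin 3), j') ∈ {y ∈ P.cellsAbove | y.1 = (1:Fin 3) ∧ y.2 < j}).card
      = (j : ℕ) - (n - (P.1 1 : ℕ)) := by
    rw [card_interval _ (n - (P.1 1 : ℕ)) (j : ℕ) (by have := j.isLt; omega) (fun j' => by
      simp only [Set.mem_sep_iff, mem_cells, Fin.lt_def]
      tauto)]
  rw [e0, e1, e2]
  omega

/-- Closed form of `dinv` as a function of the two column counts. -/
def dv (n a b : ℕ) : ℕ := b + min (a-b) (n/3+1) + (a - max (a-b) (n/3))

lemma dinv_eq {n : ℕ} (hn : 0 < n) (h3 : n % 3 ≠ 0) (P : DyckPath 3 n) :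
    P.dinv = dv n (P.1 0 : ℕ) (P.1 1 : ℕ) := by
  classical
  unfold dv
  obtain ⟨hm, ha, hb, h2⟩ := path_facts P
  unfold DyckPath.dinv
  rw [ncard_prod, Fin.sum_univ_three]
  have e0 : (univ.filter fun j : Fin n => ((0 : Fin 3), j) ∈
      {x ∈ P.cellsAbove | dinvCond 3 n (P.arm x) (P.leg x)}).card
      = (n - (P.1 0 : ℕ) + min ((P.1 0 : ℕ) - (P.1 1 : ℕ)) (n / 3 + 1) - (n - (P.1 0 : ℕ)))
        + (n - (n - (P.1 0 : ℕ) + max ((P.1 0 : ℕ) - (P.1 1 : ℕ)) (n / 3))) := by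
    apply card_interval2 _ (n - (P.1 0 : ℕ))
      (n - (P.1 0 : ℕ) + min ((P.1 0 : ℕ) - (P.1 1 : ℕ)) (n / 3 + 1))
      (n - (P.1 0 : ℕ) + max ((P.1 0 : ℕ) - (P.1 1 : ℕ)) (n / 3)) n
      (by omega) (by omega) (by omega)
    intro j
    have hj := j.isLt
    simp only [Set.mem_sep_iff, mem_cells, arm_zero P j, leg_zero P j, dinvCond_iff hn]
    split_ifs with hc <;> omega
  have e1 : (univ.filter fun j : Fin n => ((1 : Fin 3), j) ∈
      {x ∈ P.cellsAbove | dinvCond 3 n (P.arm x) (P.leg x)}).card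
      = n - (n - (P.1 1 : ℕ)) := by
    apply card_interval _ (n - (P.1 1 : ℕ)) n (by omega)
    intro j
    have hj := j.isLt
    simp only [Set.mem_sep_iff, mem_cells, arm_one P j, leg_one P j, dinvCond_iff hn]
    omega
  have e2 : (univ.filter fun j : Fin n => ((2 : Fin 3), j) ∈
      {x ∈ P.cellsAbove | dinvCond 3 n (P.arm x) (P.leg x)}).card = 0 := by
    apply card_none
    intro j
    have hj := j.isLt
    simp only [Set.mem_sep_iff, mem_cells]
    rintro ⟨hmem, -⟩
    omega
  rw [e0, e1, e2]
  omega

lemma area_eq {n : ℕ} (hn : 0 < n) (h3 : n % 3 ≠ 0) (P : DyckPath 3 n) :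
    P.area = n - 1 - ((P.1 0 : ℕ) + (P.1 1 : ℕ)) := by
  classical
  obtain ⟨hm, ha, hb, h2⟩ := path_facts P
  unfold DyckPath.area
  rw [ncard_prod, Fin.sum_univ_three]
  have e0 : (univ.filter fun j : Fin n => ((0 : Fin 3), j) ∈
      {x : Fin 3 × Fin n | n * ((x.1 : ℕ) + 1) ≤ 3 * (x.2 : ℕ) ∧ x ∉ P.cellsAbove}).card
      = (n - (P.1 0 : ℕ)) - (n / 3 + 1) := by
    apply card_interval _ (n / 3 + 1) (n - (P.1 0 : ℕ)) (by omega)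
    intro j
    have hj := j.isLt
    simp only [Set.mem_setOf_eq, mem_cells, Fin.val_zero]
    omega
  have e1 : (univ.filter fun j : Fin n => ((1 : Fin 3), j) ∈
      {x : Fin 3 × Fin n | n * ((x.1 : ℕ) + 1) ≤ 3 * (x.2 : ℕ) ∧ x ∉ P.cellsAbove}).card
      = (n - (P.1 1 : ℕ)) - (n - n / 3) := by
    apply card_interval _ (n - n / 3) (n - (P.1 1 : ℕ)) (by omega)
    intro j
    have hj := j.isLt
    simp only [Set.mem_setOf_eq, mem_cells, Fin.val_one]
    omega
  have e2 : (univ.filter fun j : Fin n => ((2 : Fin 3), j) ∈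
      {x : Fin 3 × Fin n | n * ((x.1 : ℕ) + 1) ≤ 3 * (x.2 : ℕ) ∧ x ∉ P.cellsAbove}).card = 0 := by
    apply card_none
    intro j
    have hj := j.isLt
    simp only [Set.mem_setOf_eq, mem_cells, Fin.val_two]
    omega
  rw [e0, e1, e2]
  omega

/-- First column count of the image of a path under the symmetry involution. -/
def nxtA (n a b : ℕ) : ℕ :=
  if n - 1 - (a+b) ≤ n/3 then n - 1 - (a+b)
  else if (n - 1 - (a+b) - n/3) % 2 = 0 then (n - 1 - (a+b) + n/3)/2
  else (n - 1 - dv n a b) - ((n - 1 - (a+b) - n/3 - 1)/2)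

/-- Second column count of the image of a path under the symmetry involution. -/
def nxtB (n a b : ℕ) : ℕ :=
  if n - 1 - (a+b) ≤ n/3 then (n - 1 - dv n a b) - (n - 1 - (a+b))
  else if (n - 1 - (a+b) - n/3) % 2 = 0 then (n - 1 - dv n a b) - ((n - 1 - (a+b) + n/3)/2)
  else (n - 1 - (a+b) - n/3 - 1)/2

lemma nxt_props (n a b : ℕ) (h3 : n % 3 ≠ 0) (hb : b ≤ a) (ha : 3*a ≤ 2*n) (hbn : 3*b ≤ n) :
    nxtB n a b ≤ nxtA n a b ∧ 3 * nxtA n a b ≤ 2*n ∧ 3 * nxtB n a b ≤ n ∧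
    dv n (nxtA n a b) (nxtB n a b) = n - 1 - (a+b) ∧
    nxtA n a b + nxtB n a b = n - 1 - dv n a b := by
  unfold nxtA nxtB dv
  split_ifs <;> omega

lemma dv_inj (n a b a' b' : ℕ) (h3 : n % 3 ≠ 0) (hb : b ≤ a) (ha : 3*a ≤ 2*n) (hbn : 3*b ≤ n)
    (hb' : b' ≤ a') (ha' : 3*a' ≤ 2*n) (hbn' : 3*b' ≤ n)
    (h1 : dv n a b = dv n a' b') (h2 : a + b = a' + b') : a = a' ∧ b = b' := by
  unfold dv at h1
  omega

lemma dv_le (n a b : ℕ) (h3 : n % 3 ≠ 0) (hb : b ≤ a) (ha : 3*a ≤ 2*n) (hbn : 3*b ≤ n) :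
    dv n a b ≤ n - 1 := by
  unfold dv; omega

/-- Build a `(3,n)`-Dyck path from its two column counts. -/
def mkPath (n a b : ℕ) (hb : b ≤ a) (ha : 3*a ≤ 2*n) (hbn : 3*b ≤ n) : DyckPath 3 n :=
  ⟨fun i => if (i : ℕ) = 0 then ⟨a, by omega⟩ else if (i : ℕ) = 1 then ⟨b, by omega⟩
    else ⟨0, by omega⟩, by
    constructor
    · intro i j hij
      fin_cases i <;> fin_cases j <;> simp_all <;> omega
    · intro i
      fin_cases i <;> simp <;> omega⟩

/-- The symmetry involution on `(3,n)`-Dyck paths. -/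
noncomputable def sigma {n : ℕ} (h3 : n % 3 ≠ 0) (P : DyckPath 3 n) : DyckPath 3 n :=
  mkPath n (nxtA n (P.1 0 : ℕ) (P.1 1 : ℕ)) (nxtB n (P.1 0 : ℕ) (P.1 1 : ℕ))
    (nxt_props n _ _ h3 (path_facts P).1 (path_facts P).2.1 (path_facts P).2.2.1).1
    (nxt_props n _ _ h3 (path_facts P).1 (path_facts P).2.1 (path_facts P).2.2.1).2.1
    (nxt_props n _ _ h3 (path_facts P).1 (path_facts P).2.1 (path_facts P).2.2.1).2.2.1

lemma sigma_val0 {n : ℕ} (h3 : n % 3 ≠ 0) (P : DyckPath 3 n) :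
    ((sigma h3 P).1 0 : ℕ) = nxtA n (P.1 0 : ℕ) (P.1 1 : ℕ) := rfl
lemma sigma_val1 {n : ℕ} (h3 : n % 3 ≠ 0) (P : DyckPath 3 n) :
    ((sigma h3 P).1 1 : ℕ) = nxtB n (P.1 0 : ℕ) (P.1 1 : ℕ) := rfl

lemma sigma_dinv {n : ℕ} (hn : 0 < n) (h3 : n % 3 ≠ 0) (P : DyckPath 3 n) :
    (sigma h3 P).dinv = P.area := by
  obtain ⟨hm, ha, hb, h2⟩ := path_facts P
  rw [dinv_eq hn h3, area_eq hn h3, sigma_val0, sigma_val1,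
    (nxt_props n _ _ h3 hm ha hb).2.2.2.1]

lemma sigma_area {n : ℕ} (hn : 0 < n) (h3 : n % 3 ≠ 0) (P : DyckPath 3 n) :
    (sigma h3 P).area = P.dinv := by
  obtain ⟨hm, ha, hb, h2⟩ := path_facts P
  rw [dinv_eq hn h3, area_eq hn h3, sigma_val0, sigma_val1,
    (nxt_props n _ _ h3 hm ha hb).2.2.2.2]
  have := dv_le n (P.1 0 : ℕ) (P.1 1 : ℕ) h3 hm ha hb
  omega

lemma sigma_invol {n : ℕ} (hn : 0 < n) (h3 : n % 3 ≠ 0) (P : DyckPath 3 n) :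
    sigma h3 (sigma h3 P) = P := by
  obtain ⟨hm, ha, hb, h2⟩ := path_facts P
  obtain ⟨hm', ha', hb', h2'⟩ := path_facts (sigma h3 P)
  obtain ⟨hm'', ha'', hb'', h2''⟩ := path_facts (sigma h3 (sigma h3 P))
  have key1 : dv n ((sigma h3 (sigma h3 P)).1 0 : ℕ) ((sigma h3 (sigma h3 P)).1 1 : ℕ)
      = dv n (P.1 0 : ℕ) (P.1 1 : ℕ) := by
    rw [sigma_val0 h3 (sigma h3 P), sigma_val1 h3 (sigma h3 P),
      (nxt_props n _ _ h3 hm' ha' hb').2.2.2.1, sigma_val0 h3 P, sigma_val1 h3 P,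
      (nxt_props n _ _ h3 hm ha hb).2.2.2.2]
    have := dv_le n (P.1 0 : ℕ) (P.1 1 : ℕ) h3 hm ha hb
    omega
  have key2 : ((sigma h3 (sigma h3 P)).1 0 : ℕ) + ((sigma h3 (sigma h3 P)).1 1 : ℕ)
      = (P.1 0 : ℕ) + (P.1 1 : ℕ) := by
    have e1 : ((sigma h3 (sigma h3 P)).1 0 : ℕ) + ((sigma h3 (sigma h3 P)).1 1 : ℕ)
        = n - 1 - dv n ((sigma h3 P).1 0 : ℕ) ((sigma h3 P).1 1 : ℕ) := by
      rw [sigma_val0 h3 (sigma h3 P), sigma_val1 h3 (sigma h3 P)]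
      exact (nxt_props n _ _ h3 hm' ha' hb').2.2.2.2
    have e2 : dv n ((sigma h3 P).1 0 : ℕ) ((sigma h3 P).1 1 : ℕ)
        = n - 1 - ((P.1 0 : ℕ) + (P.1 1 : ℕ)) := by
      rw [sigma_val0 h3 P, sigma_val1 h3 P]
      exact (nxt_props n _ _ h3 hm ha hb).2.2.2.1
    rw [e1, e2]
    omega
  obtain ⟨ea, eb⟩ := dv_inj n _ _ _ _ h3 hm'' ha'' hb'' hm ha hb key1 key2
  apply Subtype.ext
  funext i
  have hi : (i : ℕ) = 0 ∨ (i : ℕ) = 1 ∨ (i : ℕ) = 2 := by omega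
  rcases hi with hi | hi | hi
  · have : i = 0 := Fin.ext hi
    subst this; exact Fin.ext ea
  · have : i = 1 := Fin.ext hi
    subst this; exact Fin.ext eb
  · have : i = 2 := Fin.ext hi
    subst this; exact Fin.ext (by rw [h2'', h2])

end QtAux


/-- For every positive integer `n` not divisible by 3, the
`(3,n)`-rational `q,t`-Catalan polynomial is symmetric in `q` and `t`:
`C_{3,n}(q,t) = C_{3,n}(t,q)` (swapping the two variables fixes the polynomial). -/
theorem ratCatalan_three_symm (n : ℕ) (hn : 0 < n) (h3 : ¬ (3 ∣ n)) :
    MvPolynomial.rename (Equiv.swap (0 : Fin 2) 1) (ratCatalan 3 n) = ratCatalan 3 n := by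
  have h3' : n % 3 ≠ 0 := fun h => h3 (Nat.dvd_of_mod_eq_zero h)
  unfold ratCatalan
  rw [map_sum]
  have step : ∀ P : DyckPath 3 n,
      (rename (Equiv.swap (0 : Fin 2) 1)) (X 0 ^ P.dinv * X 1 ^ P.area)
        = (X 1 ^ P.dinv * X 0 ^ P.area : MvPolynomial (Fin 2) ℤ) := by
    intro P
    rw [map_mul, map_pow, map_pow, rename_X, rename_X, Equiv.swap_apply_left,
      Equiv.swap_apply_right]
  rw [Finset.sum_congr rfl (fun P _ => step P)]
  rw [← Equiv.sum_comp
    (⟨QtAux.sigma h3', QtAux.sigma h3', QtAux.sigma_invol hn h3',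
      QtAux.sigma_invol hn h3'⟩ : DyckPath 3 n ≃ DyckPath 3 n)
    (fun P => X 0 ^ P.dinv * X 1 ^ P.area : DyckPath 3 n → MvPolynomial (Fin 2) ℤ)]
  refine Finset.sum_congr rfl fun P _ => ?_
  simp only [Equiv.coe_fn_mk]
  rw [QtAux.sigma_dinv hn h3', QtAux.sigma_area hn h3']
  ring
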